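/- If a sequent Γ ⇒ Δ is provable in the finitary sequent calculus Grz_Seq + cut, then it is provable in the non-well-founded calculus Grz∞ + cut. -/

import Mathlib

/-- Modal formulas of the Grzegorczyk logic: ⊥, atoms, →, □. -/
inductive Formula : Type
  | bot : Formula
  | atom : ℕ → Formula
  | imp : Formula → Formula → Formula
  | box : Formula → Formula
deriving DecidableEq

/-- A sequent Γ ⇒ Δ is a pair of finite multisets of formulas. -/
abbrev Sequent : Type := Multiset Formula × Multiset Formula

/-- Names of the inference rules of Grz∞ + cut (including the two kinds of initial sequents). -/
inductive Rule : Type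
  | ax | axBot | impL | impR | refl | box | cut
deriving DecidableEq

/-- □Π for a multiset Π. -/
def boxed (P : Multiset Formula) : Multiset Formula := P.map Formula.box

/-- `Inst r s p₁ p₂` : the rule `r` has a (correct) instance with conclusion `s`,
first premise `p₁` and second premise `p₂` (`none` = no such premise). -/
inductive Inst : Rule → Sequent → Option Sequent → Option Sequent → Prop
  | ax (Γ Δ : Multiset Formula) (p : ℕ) :
      Inst .ax (Formula.atom p ::ₘ Γ, Formula.atom p ::ₘ Δ) none none
  | axBot (Γ Δ : Multiset Formula) :
      Inst .axBot (Formula.bot ::ₘ Γ, Δ) none none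
  | impL (Γ Δ : Multiset Formula) (A B : Formula) :
      Inst .impL (Formula.imp A B ::ₘ Γ, Δ) (some (B ::ₘ Γ, Δ)) (some (Γ, A ::ₘ Δ))
  | impR (Γ Δ : Multiset Formula) (A B : Formula) :
      Inst .impR (Γ, Formula.imp A B ::ₘ Δ) (some (A ::ₘ Γ, B ::ₘ Δ)) none
  | refl (Γ Δ : Multiset Formula) (A : Formula) :
      Inst .refl (Formula.box A ::ₘ Γ, Δ) (some (A ::ₘ Formula.box A ::ₘ Γ, Δ)) none
  | box (Γ Δ : Multiset Formula) (A : Formula) (P : Multiset Formula) :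
      Inst .box (Γ + boxed P, Formula.box A ::ₘ Δ) (some (Γ + boxed P, A ::ₘ Δ))
        (some (boxed P, {A}))
  | cut (Γ Δ : Multiset Formula) (A : Formula) :
      Inst .cut (Γ, Δ) (some (Γ, A ::ₘ Δ)) (some (A ::ₘ Γ, Δ))

/-- A labelling of tree addresses (lists of booleans; `true` = second/right child)
by a rule name together with a sequent; `none` means the address is outside the tree. -/
abbrev Lab : Type := List Bool → Option (Rule × Sequent)

/-- The labelling of the subtree at child `i`. -/
def shift (i : Bool) (l : Lab) : Lab := fun a => l (i :: a)

/-- An ∞-proof in Grz∞ + cut: a possibly infinite tree of sequents built according to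
the rules, in which every infinite branch passes through the right premise of the
rule (□) infinitely many times. -/
structure InfProof : Type where
  lab : Lab
  root_some : (lab []).isSome
  nojunk : ∀ (a : List Bool) (i : Bool), lab a = none → lab (a ++ [i]) = none
  step : ∀ (a : List Bool) (r : Rule) (s : Sequent), lab a = some (r, s) →
      Inst r s ((lab (a ++ [false])).map Prod.snd) ((lab (a ++ [true])).map Prod.snd)
  branch : ∀ f : ℕ → Bool, (∀ n : ℕ, (lab ((List.range n).map f)).isSome) →
      ∀ N : ℕ, ∃ n : ℕ, N ≤ n ∧ f n = true ∧
        (lab ((List.range n).map f)).map Prod.fst = some Rule.box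

/-- The sequent at the root of an ∞-proof. -/
def rootSeq (π : InfProof) : Sequent := ((π.lab []).map Prod.snd).getD (0, 0)

/-- `Proves π S` : the ∞-proof `π` is an ∞-proof of the sequent `S`. -/
def Proves (π : InfProof) (S : Sequent) : Prop := ∃ r : Rule, π.lab [] = some (r, S)

/-- An ∞-proof contains no application of the cut rule (i.e. it is a proof of Grz∞). -/
def NoCut (π : InfProof) : Prop := ∀ (a : List Bool) (r : Rule) (s : Sequent),
  π.lab a = some (r, s) → r ≠ Rule.cut

/-- Membership of an address in the main fragment: no proper passage through a
right premise of (□) strictly below it. -/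
def InMain (l : Lab) (a : List Bool) : Prop :=
  (l a).isSome ∧ ∀ (b c : List Bool), a = b ++ true :: c →
    (l b).map Prod.fst = some Rule.box → c = []

/-- The local height |π| : the length of the longest branch in the main fragment. -/
noncomputable def height (l : Lab) : ℕ := sSup {n : ℕ | ∃ a : List Bool, InMain l a ∧ a.length = n}

/-- The relations ∼ₙ on ∞-proofs (presented on labellings), defined inductively:
π ∼₀ τ always; a single-node proof is ∼ₙ-related to itself; proofs ending in the same
instance of (→L), (cut), (→R), (refl) are ∼ₙ-related when their immediate subproofs are;
proofs ending in the same instance of (□) are ∼ₙ₊₁-related when the left-premise subproofs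
are ∼ₙ₊₁-related and the right-premise subproofs are ∼ₙ-related. -/
inductive Sim : ℕ → Lab → Lab → Prop
  | zero (l m : Lab) : Sim 0 l m
  | leaf (n : ℕ) (l : Lab) : height l = 0 → Sim n l l
  | bin (n : ℕ) (l m : Lab) (r : Rule) (s : Sequent) :
      (r = Rule.impL ∨ r = Rule.cut) →
      l [] = some (r, s) → m [] = some (r, s) →
      (l [false]).map Prod.snd = (m [false]).map Prod.snd →
      (l [true]).map Prod.snd = (m [true]).map Prod.snd →
      Sim n (shift false l) (shift false m) → Sim n (shift true l) (shift true m) →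
      Sim n l m
  | un (n : ℕ) (l m : Lab) (r : Rule) (s : Sequent) :
      (r = Rule.impR ∨ r = Rule.refl) →
      l [] = some (r, s) → m [] = some (r, s) →
      (l [false]).map Prod.snd = (m [false]).map Prod.snd →
      Sim n (shift false l) (shift false m) →
      Sim n l m
  | box (n : ℕ) (l m : Lab) (s : Sequent) :
      l [] = some (Rule.box, s) → m [] = some (Rule.box, s) →
      (l [false]).map Prod.snd = (m [false]).map Prod.snd →
      (l [true]).map Prod.snd = (m [true]).map Prod.snd →
      Sim (n + 1) (shift false l) (shift false m) → Sim n (shift true l) (shift true m) →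
      Sim (n + 1) l m

/-- The sets 𝒫ₙ of ∞-proofs (presented on labellings), defined inductively:
𝒫₀ is everything; single-node proofs are in every 𝒫ₙ; (→L), (→R), (refl) preserve
membership in 𝒫ₙ; a proof ending in (□) with left-premise subproof in 𝒫ₙ₊₁ and
right-premise subproof in 𝒫ₙ is in 𝒫ₙ₊₁. -/
inductive MemP : ℕ → Lab → Prop
  | zero (l : Lab) : MemP 0 l
  | leaf (n : ℕ) (l : Lab) : height l = 0 → MemP n l
  | bin (n : ℕ) (l : Lab) (s : Sequent) :
      l [] = some (Rule.impL, s) →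
      MemP n (shift false l) → MemP n (shift true l) → MemP n l
  | un (n : ℕ) (l : Lab) (r : Rule) (s : Sequent) :
      (r = Rule.impR ∨ r = Rule.refl) →
      l [] = some (r, s) → MemP n (shift false l) → MemP n l
  | box (n : ℕ) (l : Lab) (s : Sequent) :
      l [] = some (Rule.box, s) →
      MemP (n + 1) (shift false l) → MemP n (shift true l) → MemP (n + 1) l

/- The metric d(π,τ) = 2^(−sup{n : π ∼ₙ τ}), with 2^(−∞) = 0. -/
open Classical in
noncomputable def pdist (π τ : InfProof) : ℝ :=
  if ∀ n : ℕ, Sim n π.lab τ.lab then 0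
  else (2 : ℝ) ^ (-((sSup {n : ℕ | Sim n π.lab τ.lab} : ℕ) : ℤ))

/-- A mapping on ∞-proofs is nonexpansive if it preserves all relations ∼ₙ. -/
def Nonexpansive (f : InfProof → InfProof) : Prop :=
  ∀ (n : ℕ) (π τ : InfProof), Sim n π.lab τ.lab → Sim n (f π).lab (f τ).lab

/-- A mapping is adequate if it is nonexpansive, maps 𝒫₁ into 𝒫₁,
and does not increase local height. -/
def Adequate (f : InfProof → InfProof) : Prop :=
  Nonexpansive f ∧ (∀ π : InfProof, MemP 1 π.lab → MemP 1 (f π).lab) ∧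
    ∀ π : InfProof, height (f π).lab ≤ height π.lab

/-- The set 𝒫₁ of ∞-proofs whose main fragment is cut-free, as a subtype. -/
abbrev P1 : Type := {π : InfProof // MemP 1 π.lab}

/-- An A-reducing mapping: a nonexpansive map ℛ : 𝒫₁ × 𝒫₁ → 𝒫₁ such that
ℛ(π′,π″) proves Γ ⇒ Δ whenever π′ proves Γ ⇒ Δ, A and π″ proves A, Γ ⇒ Δ. -/
def Reducing (A : Formula) (R : P1 → P1 → P1) : Prop :=
  (∀ (n : ℕ) (p₁ p₂ q₁ q₂ : P1), Sim n p₁.1.lab q₁.1.lab → Sim n p₂.1.lab q₂.1.lab →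
      Sim n (R p₁ p₂).1.lab (R q₁ q₂).1.lab) ∧
  ∀ (p₁ p₂ : P1) (Γ Δ : Multiset Formula),
    Proves p₁.1 (Γ, A ::ₘ Δ) → Proves p₂.1 (A ::ₘ Γ, Δ) → Proves (R p₁ p₂).1 (Γ, Δ)

/-- A mapping is root-preserving if it maps ∞-proofs to ∞-proofs of the same sequent. -/
def RootPres (f : InfProof → InfProof) : Prop :=
  ∀ (π : InfProof) (S : Sequent), Proves π S → Proves (f π) S

/-- The uniform distance on mappings of ∞-proofs. -/
noncomputable def udist (U V : InfProof → InfProof) : ℝ :=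
  ⨆ π : InfProof, pdist (U π) (V π)

/- The immediate subproof of `π` at child `i` (junk value `π` if there is none). -/
open Classical in
noncomputable def subtree (π : InfProof) (i : Bool) : InfProof :=
  if h : ∃ τ : InfProof, τ.lab = shift i π.lab then h.choose else π

/-- `IsFOp E F` : `F` is the operator ℱ (relative to the one-step cut-elimination map
`E` = ℰ*) defined by: on proofs with cut-free main fragment it commutes with the last
rule, applying `U` at right premises of (□) and fixing single-node proofs; on other
proofs it first applies `E`. -/
def IsFOp (E : InfProof → InfProof) (F : (InfProof → InfProof) → InfProof → InfProof) : Prop :=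
  ∀ (U : InfProof → InfProof) (π : InfProof),
    (MemP 1 π.lab → height π.lab = 0 → F U π = π) ∧
    (∀ (r : Rule) (s : Sequent), MemP 1 π.lab → π.lab [] = some (r, s) →
        r ≠ Rule.box → r ≠ Rule.cut → height π.lab ≠ 0 →
        (F U π).lab [] = some (r, s) ∧
        shift false (F U π).lab = (F U (subtree π false)).lab ∧
        (r = Rule.impL → shift true (F U π).lab = (F U (subtree π true)).lab)) ∧
    (∀ s : Sequent, MemP 1 π.lab → π.lab [] = some (Rule.box, s) →
        (F U π).lab [] = some (Rule.box, s) ∧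
        shift false (F U π).lab = (F U (subtree π false)).lab ∧
        shift true (F U π).lab = (U (subtree π true)).lab) ∧
    (¬ MemP 1 π.lab → F U π = F U (E π))

/-- Membership in 𝒩ₙ : a root-preserving nonexpansive map whose image lies in 𝒫ₙ. -/
def InN (n : ℕ) (U : InfProof → InfProof) : Prop :=
  Nonexpansive U ∧ RootPres U ∧ ∀ π : InfProof, MemP n (U π).lab

/-- The finitary sequent calculus Grz_Seq (with cut allowed iff the flag is `true`). -/
inductive GrzSeq : Bool → Sequent → Prop
  | ax (c : Bool) (Γ Δ : Multiset Formula) (A : Formula) :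
      GrzSeq c (A ::ₘ Γ, A ::ₘ Δ)
  | bot (c : Bool) (Γ Δ : Multiset Formula) :
      GrzSeq c (Formula.bot ::ₘ Γ, Δ)
  | impL (c : Bool) (Γ Δ : Multiset Formula) (A B : Formula) :
      GrzSeq c (B ::ₘ Γ, Δ) → GrzSeq c (Γ, A ::ₘ Δ) →
      GrzSeq c (Formula.imp A B ::ₘ Γ, Δ)
  | impR (c : Bool) (Γ Δ : Multiset Formula) (A B : Formula) :
      GrzSeq c (A ::ₘ Γ, B ::ₘ Δ) → GrzSeq c (Γ, Formula.imp A B ::ₘ Δ)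
  | refl (c : Bool) (Γ Δ : Multiset Formula) (B : Formula) :
      GrzSeq c (B ::ₘ Formula.box B ::ₘ Γ, Δ) → GrzSeq c (Formula.box B ::ₘ Γ, Δ)
  | grz (c : Bool) (Γ Δ : Multiset Formula) (A : Formula) (P : Multiset Formula) :
      GrzSeq c (Formula.box (Formula.imp A (Formula.box A)) ::ₘ boxed P, {A}) →
      GrzSeq c (Γ + boxed P, Formula.box A ::ₘ Δ)
  | cut (Γ Δ : Multiset Formula) (A : Formula) :
      GrzSeq true (Γ, A ::ₘ Δ) → GrzSeq true (A ::ₘ Γ, Δ) → GrzSeq true (Γ, Δ)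

namespace SeqToInf
open Formula

/-- "Reflection" formula A → □A -/
def BB (A : Formula) : Formula := .imp A (.box A)

/-- Syntactic descriptions of (possibly infinite, regular) proof trees. -/
inductive PT : Type
  | leaf (r : Rule) (s : Sequent)
  | un (r : Rule) (s : Sequent) (t : PT)
  | bin (r : Rule) (s : Sequent) (t u : PT)
  | wk (W V : Multiset Formula) (t : PT)
  | loop (P : Multiset Formula) (A : Formula) (d : PT)

def nodeLab : PT → Rule × Sequent
  | .leaf r s => (r, s)
  | .un r s _ => (r, s)
  | .bin r s _ _ => (r, s)
  | .wk W V t => ((nodeLab t).1, ((nodeLab t).2.1 + W, (nodeLab t).2.2 + V))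
  | .loop P A _ => (.cut, (boxed P, {A}))

/-- Finite proof of A, Γ ⇒ A, Δ. -/
def idp : Formula → Multiset Formula → Multiset Formula → PT
  | .bot, Γ, Δ => .leaf .axBot (.bot ::ₘ Γ, .bot ::ₘ Δ)
  | .atom p, Γ, Δ => .leaf .ax (.atom p ::ₘ Γ, .atom p ::ₘ Δ)
  | .imp B C, Γ, Δ => .bin .impL (.imp B C ::ₘ Γ, .imp B C ::ₘ Δ)
      (.un .impR (C ::ₘ Γ, .imp B C ::ₘ Δ) (idp C (B ::ₘ Γ) Δ))
      (.un .impR (Γ, B ::ₘ .imp B C ::ₘ Δ) (idp B Γ (C ::ₘ Δ)))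
  | .box B, Γ, Δ => .un .refl (.box B ::ₘ Γ, .box B ::ₘ Δ)
      (.bin .box (B ::ₘ .box B ::ₘ Γ, .box B ::ₘ Δ)
        (idp B (.box B ::ₘ Γ) Δ)
        (.un .refl (boxed {B}, {B}) (idp B {.box B} 0)))

/-- The unfolding of a loop node. -/
def gadget (P : Multiset Formula) (A : Formula) (d : PT) : PT :=
  .bin .box (boxed P, .box (BB A) ::ₘ {A})
    (.un .impR (boxed P, BB A ::ₘ {A})
      (.bin .box (A ::ₘ boxed P, .box A ::ₘ {A}) (idp A (boxed P) {A}) (.loop P A d)))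
    (.un .impR (boxed P, {BB A})
      (.bin .box (A ::ₘ boxed P, {.box A}) (idp A (boxed P) 0) (.loop P A d)))

def children : PT → Bool → Option PT
  | .leaf _ _, _ => none
  | .un _ _ t, false => some t
  | .un _ _ _, true => none
  | .bin _ _ t _, false => some t
  | .bin _ _ _ u, true => some u
  | .wk W V t, i => if i = true ∧ (nodeLab t).1 = Rule.box then children t i
      else (children t i).map (.wk W V)
  | .loop P A d, false => some (gadget P A d)
  | .loop _ _ d, true => some d

def reach : PT → List Bool → Option PT
  | t, [] => some t
  | t, i :: a => (children t i).bind (fun c => reach c a)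

def labOf (t : PT) (a : List Bool) : Option (Rule × Sequent) := (reach t a).map nodeLab

@[simp] lemma reach_nil (t : PT) : reach t [] = some t := rfl

lemma reach_cons (t : PT) (i : Bool) (a : List Bool) :
    reach t (i :: a) = (children t i).bind (fun c => reach c a) := rfl

lemma reach_append (t : PT) (a b : List Bool) :
    reach t (a ++ b) = (reach t a).bind (fun u => reach u b) := by
  induction a generalizing t with
  | nil => simp
  | cons i a ih =>
      rw [List.cons_append, reach_cons, reach_cons]
      cases children t i with
      | none => simp
      | some c => simp [ih]

def pre (o : Option PT) : Option Sequent := o.map fun c => (nodeLab c).2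

def ValidN (t : PT) : Prop :=
  Inst (nodeLab t).1 (nodeLab t).2 (pre (children t false)) (pre (children t true))

def Good (t : PT) : Prop := ∀ a u, reach t a = some u → ValidN u

lemma Good_child {t c : PT} {i : Bool} (h : Good t) (hc : children t i = some c) : Good c := by
  intro a u hr
  exact h (i :: a) u (by rw [reach_cons, hc]; exact hr)

lemma Good_node {t : PT} (h : ValidN t) (hc : ∀ i c, children t i = some c → Good c) :
    Good t := by
  intro a u hr
  cases a with
  | nil => obtain rfl := Option.some.inj hr; exact h
  | cons i a =>
      rw [reach_cons] at hr
      cases hcc : children t i with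
      | none => rw [hcc] at hr; simp at hr
      | some c => rw [hcc] at hr; exact hc i c hcc a u hr

lemma Good_leaf {r : Rule} {s : Sequent} (h : ValidN (.leaf r s)) : Good (.leaf r s) := by
  refine Good_node h ?_
  intro i c hc
  cases i <;> exact absurd hc (by simp [children])

lemma Good_un {r : Rule} {s : Sequent} {t : PT} (h : ValidN (.un r s t)) (ht : Good t) :
    Good (.un r s t) := by
  refine Good_node h ?_
  intro i c hc
  cases i
  · simp only [children, Option.some.injEq] at hc; subst hc; exact ht
  · exact absurd hc (by simp [children])

lemma Good_bin {r : Rule} {s : Sequent} {t u : PT} (h : ValidN (.bin r s t u))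
    (ht : Good t) (hu : Good u) : Good (.bin r s t u) := by
  refine Good_node h ?_
  intro i c hc
  cases i
  · simp only [children, Option.some.injEq] at hc; subst hc; exact ht
  · simp only [children, Option.some.injEq] at hc; subst hc; exact hu

lemma idp_snd (A : Formula) (Γ Δ : Multiset Formula) :
    (nodeLab (idp A Γ Δ)).2 = (A ::ₘ Γ, A ::ₘ Δ) := by
  cases A <;> rfl

lemma Good_idp : ∀ (A : Formula) (Γ Δ : Multiset Formula), Good (idp A Γ Δ) := by
  intro A
  induction A with
  | bot =>
      intro Γ Δ
      exact Good_leaf (Inst.axBot Γ (Formula.bot ::ₘ Δ))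
  | atom p =>
      intro Γ Δ
      exact Good_leaf (Inst.ax Γ Δ p)
  | imp B C ihB ihC =>
      intro Γ Δ
      refine Good_bin (Inst.impL Γ (Formula.imp B C ::ₘ Δ) B C) ?_ ?_
      · refine Good_un ?_ (ihC _ _)
        show Inst .impR (C ::ₘ Γ, .imp B C ::ₘ Δ)
            (some ((nodeLab (idp C (B ::ₘ Γ) Δ)).2)) none
        rw [idp_snd]
        have := Inst.impR (C ::ₘ Γ) Δ B C
        rwa [Multiset.cons_swap B C Γ] at this
      · refine Good_un ?_ (ihB _ _)
        show Inst .impR (Γ, B ::ₘ .imp B C ::ₘ Δ)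
            (some ((nodeLab (idp B Γ (C ::ₘ Δ))).2)) none
        rw [idp_snd]
        have := Inst.impR Γ (B ::ₘ Δ) B C
        rwa [Multiset.cons_swap (Formula.imp B C) B Δ, Multiset.cons_swap C B Δ] at this
  | box B ih =>
      intro Γ Δ
      refine Good_un (Inst.refl Γ (Formula.box B ::ₘ Δ) B) ?_
      refine Good_bin ?_ (ih _ _) ?_
      · show Inst .box (B ::ₘ .box B ::ₘ Γ, .box B ::ₘ Δ)
            (some ((nodeLab (idp B (.box B ::ₘ Γ) Δ)).2)) (some (boxed {B}, {B}))
        rw [idp_snd]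
        have e : (B ::ₘ Γ) + boxed {B} = B ::ₘ Formula.box B ::ₘ Γ := by
          simp only [boxed, Multiset.map_singleton, Multiset.cons_add]
          rw [add_comm, Multiset.singleton_add]
        have := Inst.box (B ::ₘ Γ) Δ B {B}
        rw [e] at this
        exact this
      · refine Good_un ?_ (ih _ _)
        show Inst .refl (boxed {B}, {B})
            (some ((nodeLab (idp B {.box B} 0)).2)) none
        rw [idp_snd]
        have := Inst.refl 0 ({B} : Multiset Formula) B
        simpa [boxed] using this
def wkS (W V : Multiset Formula) (s : Sequent) : Sequent := (s.1 + W, s.2 + V)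

lemma pre_map_wk (W V : Multiset Formula) (o : Option PT) :
    pre (o.map (PT.wk W V)) = (pre o).map (wkS W V) := by
  cases o <;> simp [pre, nodeLab, wkS]

lemma inst_wk {r : Rule} {s : Sequent} {p1 p2 : Option Sequent} (W V : Multiset Formula)
    (h : Inst r s p1 p2) :
    Inst r (wkS W V s) (p1.map (wkS W V))
      (if r = Rule.box then p2 else p2.map (wkS W V)) := by
  cases h with
  | ax Γ Δ p => simpa [wkS, Multiset.cons_add] using Inst.ax (Γ + W) (Δ + V) p
  | axBot Γ Δ => simpa [wkS, Multiset.cons_add] using Inst.axBot (Γ + W) (Δ + V)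
  | impL Γ Δ A B => simpa [wkS, Multiset.cons_add] using Inst.impL (Γ + W) (Δ + V) A B
  | impR Γ Δ A B => simpa [wkS, Multiset.cons_add] using Inst.impR (Γ + W) (Δ + V) A B
  | refl Γ Δ A => simpa [wkS, Multiset.cons_add] using Inst.refl (Γ + W) (Δ + V) A
  | cut Γ Δ A => simpa [wkS, Multiset.cons_add] using Inst.cut (Γ + W) (Δ + V) A
  | box Γ Δ A P =>
      have := Inst.box (Γ + W) (Δ + V) A P
      rw [add_right_comm Γ W (boxed P)] at this
      simpa [wkS, Multiset.cons_add] using this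

lemma nodeLab_wk (W V : Multiset Formula) (t : PT) :
    nodeLab (.wk W V t) = ((nodeLab t).1, wkS W V (nodeLab t).2) := rfl

lemma ValidN_wk (W V : Multiset Formula) (t : PT) (h : ValidN t) : ValidN (.wk W V t) := by
  have h2 := inst_wk W V h
  unfold ValidN
  rw [nodeLab_wk]
  by_cases hb : (nodeLab t).1 = Rule.box
  · have cf : children (PT.wk W V t) false = (children t false).map (.wk W V) := by
      simp [children]
    have ct : children (PT.wk W V t) true = children t true := by
      simp [children, hb]
    rw [cf, ct, pre_map_wk]
    rw [hb] at h2 ⊢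
    simpa using h2
  · have cf : children (PT.wk W V t) false = (children t false).map (.wk W V) := by
      simp [children]
    have ct : children (PT.wk W V t) true = (children t true).map (.wk W V) := by
      simp [children, hb]
    rw [cf, ct, pre_map_wk, pre_map_wk]
    simpa [hb] using h2

lemma Good_wk (W V : Multiset Formula) : ∀ (t : PT), Good t → Good (.wk W V t) := by
  have main : ∀ (a : List Bool) (t : PT), Good t →
      ∀ u, reach (.wk W V t) a = some u → ValidN u := by
    intro a
    induction a with
    | nil =>
        intro t ht u hr
        obtain rfl := Option.some.inj hr
        exact ValidN_wk W V t (ht [] t rfl)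
    | cons i a ih =>
        intro t ht u hr
        rw [reach_cons] at hr
        by_cases hb : i = true ∧ (nodeLab t).1 = Rule.box
        · rw [show children (PT.wk W V t) i = children t i by simp [children, hb.1, hb.2]] at hr
          cases hcc : children t i with
          | none => rw [hcc] at hr; simp at hr
          | some c =>
              rw [hcc] at hr
              exact Good_child ht hcc a u hr
        · rw [show children (PT.wk W V t) i = (children t i).map (.wk W V) by
            simp [children, hb]] at hr
          cases hcc : children t i with
          | none => rw [hcc] at hr; simp at hr
          | some c =>
              rw [hcc] at hr
              exact ih c (Good_child ht hcc) u hr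
  intro t ht a u hr
  exact main a t ht u hr

lemma gadget_snd (P : Multiset Formula) (A : Formula) (d : PT) :
    (nodeLab (gadget P A d)).2 = (boxed P, .box (BB A) ::ₘ {A}) := rfl

lemma Good_loop (P : Multiset Formula) (A : Formula) (d : PT) (hd : Good d)
    (hroot : (nodeLab d).2 = (Formula.box (BB A) ::ₘ boxed P, {A})) :
    Good (.loop P A d) := by
  have vroot : ValidN (.loop P A d) := by
    show Inst .cut (boxed P, {A}) (some ((nodeLab (gadget P A d)).2)) (some ((nodeLab d).2))
    rw [gadget_snd, hroot]
    exact Inst.cut (boxed P) {A} (Formula.box (BB A))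
  have vg : ValidN (gadget P A d) := by
    show Inst .box (boxed P, .box (BB A) ::ₘ {A})
      (some (boxed P, BB A ::ₘ {A})) (some (boxed P, {BB A}))
    have := Inst.box 0 {A} (BB A) P
    simpa using this
  have vX : ValidN (.un .impR (boxed P, BB A ::ₘ {A})
      (.bin .box (A ::ₘ boxed P, .box A ::ₘ {A}) (idp A (boxed P) {A}) (.loop P A d))) := by
    show Inst .impR (boxed P, BB A ::ₘ {A}) (some (A ::ₘ boxed P, .box A ::ₘ {A})) none
    exact Inst.impR (boxed P) {A} A (.box A)
  have vXb : ValidN (.bin .box (A ::ₘ boxed P, .box A ::ₘ {A})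
      (idp A (boxed P) {A}) (.loop P A d)) := by
    show Inst .box (A ::ₘ boxed P, .box A ::ₘ {A})
      (some ((nodeLab (idp A (boxed P) {A})).2)) (some (boxed P, {A}))
    rw [idp_snd]
    have := Inst.box {A} {A} A P
    simpa [Multiset.singleton_add] using this
  have vY : ValidN (.un .impR (boxed P, {BB A})
      (.bin .box (A ::ₘ boxed P, {.box A}) (idp A (boxed P) 0) (.loop P A d))) := by
    show Inst .impR (boxed P, {BB A}) (some (A ::ₘ boxed P, {.box A})) none
    have := Inst.impR (boxed P) 0 A (.box A)
    simpa [BB] using this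
  have vYb : ValidN (.bin .box (A ::ₘ boxed P, {.box A})
      (idp A (boxed P) 0) (.loop P A d)) := by
    show Inst .box (A ::ₘ boxed P, {.box A})
      (some ((nodeLab (idp A (boxed P) 0)).2)) (some (boxed P, {A}))
    rw [idp_snd]
    have := Inst.box {A} 0 A P
    simpa [Multiset.singleton_add] using this
  have key : ∀ n (a : List Bool), a.length ≤ n → ∀ u, reach (.loop P A d) a = some u →
      ValidN u := by
    intro n
    induction n with
    | zero =>
        intro a ha u hr
        have ha0 : a = [] := List.length_eq_zero_iff.mp (Nat.le_zero.mp ha)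
        subst ha0
        obtain rfl := Option.some.inj hr
        exact vroot
    | succ n ih =>
        intro a ha u hr
        match a with
        | [] => obtain rfl := Option.some.inj hr; exact vroot
        | true :: a' =>
            rw [reach_cons, show children (PT.loop P A d) true = some d from rfl,
              Option.bind_some] at hr
            exact hd a' u hr
        | false :: a' =>
            rw [reach_cons, show children (PT.loop P A d) false = some (gadget P A d) from rfl,
              Option.bind_some] at hr
            match a' with
            | [] => obtain rfl := Option.some.inj hr; exact vg
            | i :: a₂ =>
                rw [gadget, reach_cons] at hr
                cases i with
                | false =>
                    rw [show children (PT.bin .box (boxed P, .box (BB A) ::ₘ {A}) _ _) false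
                        = some _ from rfl, Option.bind_some] at hr
                    match a₂ with
                    | [] => obtain rfl := Option.some.inj hr; exact vX
                    | true :: a₃ =>
                        rw [reach_cons, show children (PT.un .impR _ _) true = none from rfl] at hr
                        simp at hr
                    | false :: a₃ =>
                        rw [reach_cons, show children (PT.un .impR (boxed P, BB A ::ₘ {A}) _) false
                            = some _ from rfl, Option.bind_some] at hr
                        match a₃ with
                        | [] => obtain rfl := Option.some.inj hr; exact vXb
                        | false :: a₄ =>
                            rw [reach_cons, show children (PT.bin .box (A ::ₘ boxed P, .box A ::ₘ {A})
                                (idp A (boxed P) {A}) (.loop P A d)) false = some (idp A (boxed P) {A})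
                                from rfl, Option.bind_some] at hr
                            exact Good_idp A (boxed P) {A} a₄ u hr
                        | true :: a₄ =>
                            rw [reach_cons, show children (PT.bin .box (A ::ₘ boxed P, .box A ::ₘ {A})
                                (idp A (boxed P) {A}) (.loop P A d)) true = some (.loop P A d)
                                from rfl, Option.bind_some] at hr
                            refine ih a₄ ?_ u hr
                            simp at ha
                            omega
                | true =>
                    rw [show children (PT.bin .box (boxed P, .box (BB A) ::ₘ {A}) _ _) true
                        = some _ from rfl, Option.bind_some] at hr
                    match a₂ with
                    | [] => obtain rfl := Option.some.inj hr; exact vY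
                    | true :: a₃ =>
                        rw [reach_cons, show children (PT.un .impR _ _) true = none from rfl] at hr
                        simp at hr
                    | false :: a₃ =>
                        rw [reach_cons, show children (PT.un .impR (boxed P, {BB A}) _) false
                            = some _ from rfl, Option.bind_some] at hr
                        match a₃ with
                        | [] => obtain rfl := Option.some.inj hr; exact vYb
                        | false :: a₄ =>
                            rw [reach_cons, show children (PT.bin .box (A ::ₘ boxed P, {.box A})
                                (idp A (boxed P) 0) (.loop P A d)) false = some (idp A (boxed P) 0)
                                from rfl, Option.bind_some] at hr
                            exact Good_idp A (boxed P) 0 a₄ u hr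
                        | true :: a₄ =>
                            rw [reach_cons, show children (PT.bin .box (A ::ₘ boxed P, {.box A})
                                (idp A (boxed P) 0) (.loop P A d)) true = some (.loop P A d)
                                from rfl, Option.bind_some] at hr
                            refine ih a₄ ?_ u hr
                            simp at ha
                            omega
  intro a u hr
  exact key a.length a le_rfl u hr
def fmu : Formula → ℕ
  | .bot => 0
  | .atom _ => 0
  | .imp B C => max (fmu C) (fmu B) + 2
  | .box B => fmu B + 2

def mu : PT → ℕ
  | .leaf _ _ => 0
  | .un _ _ t => mu t + 1
  | .bin r _ t u => (if r = Rule.box then mu t else max (mu t) (mu u)) + 1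
  | .wk _ _ t => mu t
  | .loop _ A d => max (mu d) (fmu A + 3) + 1

lemma mu_idp (A : Formula) : ∀ (Γ Δ : Multiset Formula), mu (idp A Γ Δ) = fmu A := by
  induction A with
  | bot => intro Γ Δ; rfl
  | atom p => intro Γ Δ; rfl
  | imp B C ihB ihC =>
      intro Γ Δ
      show (if Rule.impL = Rule.box then _ else
          max (mu (.un .impR _ (idp C (B ::ₘ Γ) Δ))) (mu (.un .impR _ (idp B Γ (C ::ₘ Δ))))) + 1
          = max (fmu C) (fmu B) + 2
      rw [if_neg (by decide)]
      show max (mu (idp C (B ::ₘ Γ) Δ) + 1) (mu (idp B Γ (C ::ₘ Δ)) + 1) + 1 = _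
      rw [ihC, ihB]
      omega
  | box B ih =>
      intro Γ Δ
      show ((if Rule.box = Rule.box then mu (idp B (.box B ::ₘ Γ) Δ) else _) + 1) + 1 = fmu B + 2
      rw [if_pos rfl, ih]

lemma mu_gadget (P : Multiset Formula) (A : Formula) (d : PT) :
    mu (gadget P A d) = fmu A + 3 := by
  show (if Rule.box = Rule.box then
      mu (.un .impR _ (.bin .box _ (idp A (boxed P) {A}) (.loop P A d))) else _) + 1 = _
  rw [if_pos rfl]
  show ((if Rule.box = Rule.box then mu (idp A (boxed P) {A}) else _) + 1 + 1) + 1 = _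
  rw [if_pos rfl, mu_idp]

lemma mu_step : ∀ (t : PT) (i : Bool) (c : PT), children t i = some c →
    ¬(i = true ∧ (nodeLab t).1 = Rule.box) → mu c < mu t := by
  intro t
  induction t with
  | leaf r s => intro i c hc _; simp [children] at hc
  | un r s t ih =>
      intro i c hc _
      cases i
      · obtain rfl := Option.some.inj hc; simp [mu]
      · simp [children] at hc
  | bin r s t u iht ihu =>
      intro i c hc hni
      cases i
      · obtain rfl := Option.some.inj hc
        show mu t < (if r = Rule.box then mu t else max (mu t) (mu u)) + 1
        split <;> omega
      · obtain rfl := Option.some.inj hc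
        have hr : r ≠ Rule.box := fun h => hni ⟨rfl, h⟩
        show mu u < (if r = Rule.box then mu t else max (mu t) (mu u)) + 1
        rw [if_neg hr]
        omega
  | wk W V t ih =>
      intro i c hc hni
      have hwn : (nodeLab (PT.wk W V t)).1 = (nodeLab t).1 := rfl
      rw [hwn] at hni
      rw [show children (PT.wk W V t) i = if i = true ∧ (nodeLab t).1 = Rule.box then
          children t i else (children t i).map (.wk W V) from rfl, if_neg hni] at hc
      cases hcc : children t i with
      | none => rw [hcc] at hc; simp at hc
      | some c' =>
          rw [hcc] at hc
          obtain rfl := Option.some.inj hc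
          show mu c' < mu t
          exact ih i c' hcc hni
  | loop P A d ih =>
      intro i c hc _
      cases i
      · obtain rfl := Option.some.inj hc
        show mu (gadget P A d) < max (mu d) (fmu A + 3) + 1
        rw [mu_gadget]
        omega
      · obtain rfl := Option.some.inj hc
        show mu d < max (mu d) (fmu A + 3) + 1
        omega

lemma reach_singleton (t : PT) (i : Bool) : reach t [i] = children t i := by
  rw [reach_cons]
  cases children t i <;> rfl

/-- Along any everywhere-defined branch there is a box-rule right-premise step. -/
lemma descend : ∀ (m : ℕ) (t : PT), mu t ≤ m → ∀ (f : ℕ → Bool),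
    (∀ n, (reach t ((List.range n).map f)).isSome) →
    ∃ n, f n = true ∧ (reach t ((List.range n).map f)).map (fun u => (nodeLab u).1)
      = some Rule.box := by
  intro m
  induction m with
  | zero =>
      intro t hm f hf
      have h1 := hf 1
      rw [show (List.range 1).map f = [f 0] from rfl, reach_singleton] at h1
      obtain ⟨c, hc⟩ := Option.isSome_iff_exists.mp h1
      by_cases hb : f 0 = true ∧ (nodeLab t).1 = Rule.box
      · exact ⟨0, hb.1, by simp [hb.2]⟩
      · exact absurd (mu_step t (f 0) c hc hb) (by omega)
  | succ m ih =>
      intro t hm f hf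
      have h1 := hf 1
      rw [show (List.range 1).map f = [f 0] from rfl, reach_singleton] at h1
      obtain ⟨c, hc⟩ := Option.isSome_iff_exists.mp h1
      by_cases hb : f 0 = true ∧ (nodeLab t).1 = Rule.box
      · exact ⟨0, hb.1, by simp [hb.2]⟩
      · have hmc : mu c ≤ m := by have := mu_step t (f 0) c hc hb; omega
        have hshift : ∀ n, reach t ((List.range (n + 1)).map f)
            = reach c ((List.range n).map (fun k => f (k + 1))) := by
          intro n
          rw [List.range_succ_eq_map]
          rw [show (0 :: (List.range n).map Nat.succ).map f
              = f 0 :: (List.range n).map (fun k => f (k + 1)) by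
            simp [List.map_map]]
          rw [reach_cons, hc, Option.bind_some]
        obtain ⟨k, hk1, hk2⟩ := ih c hmc (fun k => f (k + 1)) (fun n => by
          rw [← hshift n]; exact hf (n + 1))
        exact ⟨k + 1, hk1, by rw [hshift k]; exact hk2⟩
lemma labOf_root (t : PT) : labOf t [] = some (nodeLab t) := rfl

lemma nojunk_labOf (t : PT) (a : List Bool) (i : Bool) (h : labOf t a = none) :
    labOf t (a ++ [i]) = none := by
  unfold labOf at *
  rw [reach_append]
  rw [Option.map_eq_none_iff] at h
  rw [h]
  rfl

lemma step_labOf (t : PT) (hg : Good t) (a : List Bool) (r : Rule) (s : Sequent)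
    (h : labOf t a = some (r, s)) :
    Inst r s ((labOf t (a ++ [false])).map Prod.snd) ((labOf t (a ++ [true])).map Prod.snd) := by
  unfold labOf at h
  cases hu : reach t a with
  | none => rw [hu] at h; simp at h
  | some u =>
      rw [hu] at h
      have hnl : nodeLab u = (r, s) := Option.some.inj h
      have key : ∀ i : Bool, (labOf t (a ++ [i])).map Prod.snd = pre (children u i) := by
        intro i
        unfold labOf
        rw [reach_append, hu, Option.bind_some, reach_singleton]
        cases children u i <;> rfl
      rw [key, key]
      have hv := hg a u hu
      unfold ValidN at hv
      rw [hnl] at hv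
      exact hv

lemma branch_labOf (t : PT) (f : ℕ → Bool)
    (hf : ∀ n, (labOf t ((List.range n).map f)).isSome) (N : ℕ) :
    ∃ n, N ≤ n ∧ f n = true ∧
      (labOf t ((List.range n).map f)).map Prod.fst = some Rule.box := by
  have hf' : ∀ n, (reach t ((List.range n).map f)).isSome := by
    intro n
    have h := hf n
    unfold labOf at h
    cases hr : reach t ((List.range n).map f) with
    | none => rw [hr] at h; simp at h
    | some u => rfl
  obtain ⟨u, hu⟩ := Option.isSome_iff_exists.mp (hf' N)
  have hsplit : ∀ k, reach t ((List.range (N + k)).map f)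
      = reach u ((List.range k).map (fun k => f (N + k))) := by
    intro k
    rw [List.range_add, List.map_append, reach_append, hu, Option.bind_some, List.map_map]
    rfl
  obtain ⟨k, hk1, hk2⟩ := descend (mu u) u le_rfl (fun k => f (N + k)) (fun k => by
    rw [← hsplit k]; exact hf' (N + k))
  refine ⟨N + k, Nat.le_add_right N k, hk1, ?_⟩
  unfold labOf
  rw [hsplit k, Option.map_map]
  exact hk2

lemma transl : ∀ (c : Bool) (S : Sequent), GrzSeq c S →
    ∃ t : PT, Good t ∧ (nodeLab t).2 = S := by
  intro c S h
  induction h with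
  | ax c' Γ Δ A => exact ⟨idp A Γ Δ, Good_idp A Γ Δ, idp_snd A Γ Δ⟩
  | bot c' Γ Δ => exact ⟨.leaf .axBot (.bot ::ₘ Γ, Δ), Good_leaf (Inst.axBot Γ Δ), rfl⟩
  | impL c' Γ Δ A B h1 h2 ih1 ih2 =>
      obtain ⟨t1, g1, e1⟩ := ih1
      obtain ⟨t2, g2, e2⟩ := ih2
      refine ⟨.bin .impL (.imp A B ::ₘ Γ, Δ) t1 t2, ?_, rfl⟩
      refine Good_bin ?_ g1 g2
      show Inst .impL (.imp A B ::ₘ Γ, Δ) (some (nodeLab t1).2) (some (nodeLab t2).2)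
      rw [e1, e2]
      exact Inst.impL Γ Δ A B
  | impR c' Γ Δ A B h1 ih1 =>
      obtain ⟨t1, g1, e1⟩ := ih1
      refine ⟨.un .impR (Γ, .imp A B ::ₘ Δ) t1, ?_, rfl⟩
      refine Good_un ?_ g1
      show Inst .impR (Γ, .imp A B ::ₘ Δ) (some (nodeLab t1).2) none
      rw [e1]
      exact Inst.impR Γ Δ A B
  | refl c' Γ Δ B h1 ih1 =>
      obtain ⟨t1, g1, e1⟩ := ih1
      refine ⟨.un .refl (.box B ::ₘ Γ, Δ) t1, ?_, rfl⟩
      refine Good_un ?_ g1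
      show Inst .refl (.box B ::ₘ Γ, Δ) (some (nodeLab t1).2) none
      rw [e1]
      exact Inst.refl Γ Δ B
  | grz c' Γ Δ A P h1 ih1 =>
      obtain ⟨d, gd, ed⟩ := ih1
      have gl : Good (.loop P A d) := Good_loop P A d gd ed
      refine ⟨.bin .box (Γ + boxed P, .box A ::ₘ Δ) (.wk Γ Δ (.loop P A d)) (.loop P A d),
        ?_, rfl⟩
      refine Good_bin ?_ (Good_wk Γ Δ _ gl) gl
      show Inst .box (Γ + boxed P, .box A ::ₘ Δ)
        (some (boxed P + Γ, {A} + Δ)) (some (boxed P, {A}))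
      rw [add_comm (boxed P) Γ, Multiset.singleton_add]
      exact Inst.box Γ Δ A P
  | cut Γ Δ A h1 h2 ih1 ih2 =>
      obtain ⟨t1, g1, e1⟩ := ih1
      obtain ⟨t2, g2, e2⟩ := ih2
      refine ⟨.bin .cut (Γ, Δ) t1 t2, ?_, rfl⟩
      refine Good_bin ?_ g1 g2
      show Inst .cut (Γ, Δ) (some (nodeLab t1).2) (some (nodeLab t2).2)
      rw [e1, e2]
      exact Inst.cut Γ Δ A

end SeqToInf


/-- provability in Grz_Seq + cut implies provability in Grz∞ + cut. -/
theorem seq_to_inf (S : Sequent) : GrzSeq true S → ∃ π : InfProof, Proves π S := by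
  intro h
  obtain ⟨t, hg, hs⟩ := SeqToInf.transl true S h
  refine ⟨⟨SeqToInf.labOf t, ?_, ?_, ?_, ?_⟩, (SeqToInf.nodeLab t).1, ?_⟩
  · rw [SeqToInf.labOf_root]; rfl
  · exact SeqToInf.nojunk_labOf t
  · exact SeqToInf.step_labOf t hg
  · exact SeqToInf.branch_labOf t
  · show SeqToInf.labOf t [] = some ((SeqToInf.nodeLab t).1, S)
    rw [SeqToInf.labOf_root, ← hs]
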